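/- Let F be a field, m and d natural numbers, S a finite subset of F with |S| = q and d < q, and let f be a nonzero multivariate polynomial in m variables over F whose degree in each individual variable is at most d. Then the number of points x ∈ S^m with f(x) = 0 is at most q^m − (q − d)^m. Equivalently, if each coordinate is chosen independently and uniformly from S, the probability that f evaluates to zero is at most 1 − (1 − d/q)^m. -/

import Mathlib

open MvPolynomial Finset

lemma sz_nonroots_ge (F : Type*) [Field F] [DecidableEq F] (d q : ℕ)
    (S : Finset F) (hq : S.card = q) :
    ∀ (m : ℕ) (f : MvPolynomial (Fin m) F), f ≠ 0 → (∀ i, f.degreeOf i ≤ d) →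
      (q - d) ^ m ≤ ((Fintype.piFinset fun _ : Fin m => S).filter
        (fun x => MvPolynomial.eval x f ≠ 0)).card := by
  intro m
  induction m with
  | zero =>
    intro f hf _
    obtain ⟨a, rfl⟩ := MvPolynomial.C_surjective (Fin 0) f
    have ha : a ≠ 0 := fun h => hf (by simp [h])
    simp only [pow_zero]
    have : (Fintype.piFinset fun _ : Fin 0 => S).filter
        (fun x => MvPolynomial.eval x (C a) ≠ 0) =
        Fintype.piFinset fun _ : Fin 0 => S := by
      apply Finset.filter_true_of_mem
      intro x _
      simpa using ha
    rw [this]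
    simp
  | succ n ih =>
    intro f hf hdeg
    set f' : Polynomial (MvPolynomial (Fin n) F) := finSuccEquiv F n f with hf'
    have hf'0 : f' ≠ 0 := by simp [hf', hf]
    set k := f'.natDegree with hk
    have hkd : k ≤ d := by
      rw [hk, hf', natDegree_finSuccEquiv]; exact hdeg 0
    set c : MvPolynomial (Fin n) F := f'.coeff k with hc
    have hc0 : c ≠ 0 := Polynomial.leadingCoeff_ne_zero.mpr hf'0
    have hcdeg : ∀ j : Fin n, c.degreeOf j ≤ d := by
      intro j
      calc c.degreeOf j ≤ f.degreeOf j.succ := degreeOf_coeff_finSuccEquiv f j k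
        _ ≤ d := hdeg j.succ
    -- IH on c
    have hA := ih c hc0 hcdeg
    set A := (Fintype.piFinset fun _ : Fin n => S).filter
        (fun x => MvPolynomial.eval x c ≠ 0) with hAdef
    -- for each s ∈ A, at least q - d good y's
    have hfib : ∀ s ∈ A, q - d ≤ (S.filter
        (fun y => MvPolynomial.eval (Fin.cons y s) f ≠ 0)).card := by
      intro s hs
      have hsc : MvPolynomial.eval s c ≠ 0 := (Finset.mem_filter.mp hs).2
      set g : Polynomial F := f'.map (MvPolynomial.eval s) with hg
      have hgk : g.coeff k ≠ 0 := by
        rw [hg, Polynomial.coeff_map]; exact hsc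
      have hgnd : g.natDegree ≤ k := by rw [hg]; exact Polynomial.natDegree_map_le
      have hg0 : g ≠ 0 := fun h => hgk (by simp [h])
      have heval : ∀ y : F, MvPolynomial.eval (Fin.cons y s) f = g.eval y := by
        intro y
        rw [hg, hf']
        exact eval_eq_eval_mv_eval' s y f
      have hroots : (S.filter (fun y => MvPolynomial.eval (Fin.cons y s) f = 0)).card ≤ d := by
        have hsub : S.filter (fun y => MvPolynomial.eval (Fin.cons y s) f = 0)
            ⊆ g.roots.toFinset := by
          intro y hy
          rw [Multiset.mem_toFinset, Polynomial.mem_roots hg0]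
          rw [Polynomial.IsRoot, ← heval y]; exact (Finset.mem_filter.mp hy).2
        calc _ ≤ g.roots.toFinset.card := Finset.card_le_card hsub
          _ ≤ Multiset.card g.roots := Multiset.toFinset_card_le _
          _ ≤ g.natDegree := Polynomial.card_roots' g
          _ ≤ k := hgnd
          _ ≤ d := hkd
      have hsplit := Finset.card_filter_add_card_filter_not
        (s := S) (p := fun y => MvPolynomial.eval (Fin.cons y s) f = 0)
      rw [hq] at hsplit
      simp only [ne_eq]
      omega
    -- injection from sigma into the filter over m+1 variables
    have hinj : (A.sigma fun s => S.filter
          (fun y => MvPolynomial.eval (Fin.cons y s) f ≠ 0)).card ≤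
        ((Fintype.piFinset fun _ : Fin (n+1) => S).filter
          (fun x => MvPolynomial.eval x f ≠ 0)).card := by
      apply Finset.card_le_card_of_injOn (fun p => Fin.cons p.2 p.1)
      · rintro ⟨s, y⟩ hp
        rw [Finset.mem_coe, Finset.mem_sigma] at hp
        obtain ⟨hsA, hy⟩ := hp
        rw [Finset.mem_coe]
        rw [Finset.mem_filter] at hy ⊢
        refine ⟨?_, hy.2⟩
        rw [Fintype.mem_piFinset]
        intro i
        refine Fin.cases ?_ ?_ i
        · simpa using hy.1
        · intro j
          have := (Fintype.mem_piFinset.mp (Finset.mem_filter.mp hsA).1) j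
          simpa using this
      · rintro ⟨s, y⟩ _ ⟨s', y'⟩ _ h
        simp only at h
        have h0 : y = y' := by
          have := congrFun h 0
          simpa using this
        have h1 : s = s' := by
          funext j
          have := congrFun h j.succ
          simpa using this
        simp [h0, h1]
    have hsig : (q - d) ^ n * (q - d) ≤ (A.sigma fun s => S.filter
          (fun y => MvPolynomial.eval (Fin.cons y s) f ≠ 0)).card := by
      rw [Finset.card_sigma]
      calc (q - d) ^ n * (q - d) ≤ A.card * (q - d) :=
            Nat.mul_le_mul_right _ hA
        _ ≤ ∑ s ∈ A, (S.filter (fun y => MvPolynomial.eval (Fin.cons y s) f ≠ 0)).card := by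
            have := Finset.card_nsmul_le_sum A
              (fun s => (S.filter (fun y => MvPolynomial.eval (Fin.cons y s) f ≠ 0)).card)
              (q - d) hfib
            simpa [smul_eq_mul, mul_comm] using this
    calc (q - d) ^ (n + 1) = (q - d) ^ n * (q - d) := by ring
      _ ≤ _ := le_trans hsig hinj

/-- Per-variable-degree form of the Schwartz–Zippel lemma: if `f` is a nonzero
polynomial in `m` variables over a field `F` with degree at most `d < q` in
each variable, and `S` is a set of `q` field elements, then `f` has at most
`q^m − (q−d)^m` roots in `S^m`. -/
theorem schwartz_zippel_per_variable_degree
    (F : Type*) [Field F] [DecidableEq F] (m d q : ℕ)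
    (S : Finset F) (hq : S.card = q) (hd : d < q)
    (f : MvPolynomial (Fin m) F) (hf : f ≠ 0)
    (hdeg : ∀ i : Fin m, f.degreeOf i ≤ d) :
    ((Fintype.piFinset fun _ : Fin m => S).filter
        (fun x => MvPolynomial.eval x f = 0)).card ≤ q ^ m - (q - d) ^ m := by
  have hnz := sz_nonroots_ge F d q S hq m f hf hdeg
  have hsplit := Finset.card_filter_add_card_filter_not
    (s := Fintype.piFinset fun _ : Fin m => S)
    (p := fun x => MvPolynomial.eval x f = 0)
  have htot : (Fintype.piFinset fun _ : Fin m => S).card = q ^ m := by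
    rw [Fintype.card_piFinset]
    simp [hq]
  rw [htot] at hsplit
  simp only [ne_eq] at hnz
  omega
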